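/- Let E be a module over L⁰ and U ⊆ E an L⁰-convex and L⁰-absorbent set. Let X ∈ E and B ∈ ℱ, and suppose that for every A ∈ ℱ with A ⊆ B and P(A) > 0 there is no u ∈ U with 1_A•X = 1_A•u. If a ∈ L⁰ is a greatest lower bound (a.e. order) of {Y ∈ L⁰₊ : X ∈ Y•U}, then a ≥ 1 almost everywhere on B; i.e., p_U(X) ≥ 1 on B. -/

import Mathlib

open MeasureTheory Filter Pointwise

variable {Ω : Type*} [MeasurableSpace Ω] (P : MeasureTheory.Measure Ω ) [IsProbabilityMeasure P]

noncomputable instance : CommRing (Ω →ₘ[P] ℝ) :=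
  { (inferInstance : AddCommGroup (Ω →ₘ[P] ℝ)),
    (inferInstance : CommMonoid (Ω →ₘ[P] ℝ)) with
    left_distrib := fun f g h => AEEqFun.ext (by
      filter_upwards [AEEqFun.coeFn_mul f (g + h), AEEqFun.coeFn_add g h,
        AEEqFun.coeFn_add (f * g) (f * h), AEEqFun.coeFn_mul f g, AEEqFun.coeFn_mul f h]
        with ω h1 h2 h3 h4 h5
      simp only [Pi.mul_apply, Pi.add_apply] at *
      rw [h1, h2, h3, h4, h5, mul_add])
    right_distrib := fun f g h => AEEqFun.ext (by
      filter_upwards [AEEqFun.coeFn_mul (f + g) h, AEEqFun.coeFn_add f g,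
        AEEqFun.coeFn_add (f * h) (g * h), AEEqFun.coeFn_mul f h, AEEqFun.coeFn_mul g h]
        with ω h1 h2 h3 h4 h5
      simp only [Pi.mul_apply, Pi.add_apply] at *
      rw [h1, h2, h3, h4, h5, add_mul])
    zero_mul := fun f => AEEqFun.ext (by
      filter_upwards [AEEqFun.coeFn_mul 0 f, AEEqFun.coeFn_zero (β := ℝ) (μ := P)]
        with ω h1 h2
      simp only [Pi.mul_apply, Pi.zero_apply] at *
      rw [h1, h2, zero_mul])
    mul_zero := fun f => AEEqFun.ext (by
      filter_upwards [AEEqFun.coeFn_mul f 0, AEEqFun.coeFn_zero (β := ℝ) (μ := P)]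
        with ω h1 h2
      simp only [Pi.mul_apply, Pi.zero_apply] at *
      rw [h1, h2, mul_zero]) }

/-- `L⁰₊₊`: the set of a.e. strictly positive elements. -/
def L0pp (Y : Ω →ₘ[P] ℝ) : Prop := ∀ᵐ ω ∂P, 0 < Y ω

/-- The equivalence class of the indicator function of a measurable set. -/
noncomputable def ind (A : Set Ω) (hA : MeasurableSet A) : Ω →ₘ[P] ℝ :=
  AEEqFun.mk (A.indicator fun _ => (1 : ℝ)) (aestronglyMeasurable_const.indicator hA)

section ModuleDefs

variable {E : Type*} [AddCommGroup E] [Module (Ω →ₘ[P] ℝ) E]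

/-- `L⁰`-convexity of a subset of an `L⁰`-module. -/
def IsL0Convex (U : Set E) : Prop :=
  ∀ X₁ ∈ U, ∀ X₂ ∈ U, ∀ Y : Ω →ₘ[P] ℝ, 0 ≤ Y → Y ≤ 1 → Y • X₁ + (1 - Y) • X₂ ∈ U

/-- `L⁰`-absorbency of a subset of an `L⁰`-module. -/
def IsL0Absorbent (U : Set E) : Prop :=
  ∀ X : E, ∃ Y : Ω →ₘ[P] ℝ, L0pp P Y ∧ X ∈ Y • U

/-- `L⁰`-balancedness of a subset of an `L⁰`-module. -/
def IsL0Balanced (U : Set E) : Prop :=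
  ∀ X ∈ U, ∀ Y : Ω →ₘ[P] ℝ, |Y| ≤ 1 → Y • X ∈ U

/-- Closedness under countable concatenations. -/
def IsConcatClosed (C : Set E) : Prop :=
  ∀ (A : ℕ → Set Ω) (hA : ∀ n, MeasurableSet (A n)),
    Pairwise (Function.onFun Disjoint A) → (⋃ n, A n) = Set.univ →
    ∀ X : E, (∀ n, ∃ Xn ∈ C, ind P (A n) (hA n) • X = ind P (A n) (hA n) • Xn) → X ∈ C

/-- `L⁰`-seminorm. -/
def IsL0Seminorm (p : E → (Ω →ₘ[P] ℝ)) : Prop :=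
  (∀ X : E, 0 ≤ p X) ∧ (∀ (Y : Ω →ₘ[P] ℝ) (X : E), p (Y • X) = |Y| * p X) ∧
    (∀ X₁ X₂ : E, p (X₁ + X₂) ≤ p X₁ + p X₂)

/-- The set whose essential infimum is the gauge `p_K(X)`. -/
def gaugeSet (K : Set E) (X : E) : Set (Ω →ₘ[P] ℝ) :=
  {Y : Ω →ₘ[P] ℝ | 0 ≤ Y ∧ X ∈ Y • K}

end ModuleDefs

lemma coeFn_ind (A : Set Ω) (hA : MeasurableSet A) :
    ind P A hA =ᵐ[P] A.indicator fun _ => (1 : ℝ) :=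
  AEEqFun.coeFn_mk _ _

lemma ind_idem (A : Set Ω) (hA : MeasurableSet A) :
    ind P A hA * ind P A hA = ind P A hA := AEEqFun.ext (by
  filter_upwards [AEEqFun.coeFn_mul (ind P A hA) (ind P A hA), coeFn_ind P A hA]
    with ω h1 h2
  rw [h1]
  simp only [Pi.mul_apply]
  rw [h2]
  by_cases hω : ω ∈ A <;> simp [Set.indicator, hω])

lemma zero_mem_of_absorbent {E : Type*} [AddCommGroup E] [Module (Ω →ₘ[P] ℝ) E]
    {U : Set E} (habs : IsL0Absorbent P U) : (0 : E) ∈ U := by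
  obtain ⟨W, hW, hmem⟩ := habs 0
  obtain ⟨u₀, hu₀, hWu₀⟩ := Set.mem_smul_set.mp hmem
  have hsm : AEStronglyMeasurable (fun ω => (W ω)⁻¹) P :=
    (W.aestronglyMeasurable.aemeasurable.inv).aestronglyMeasurable
  set Winv : Ω →ₘ[P] ℝ := AEEqFun.mk (fun ω => (W ω)⁻¹) hsm with hWinvdef
  have hWinv : Winv * W = 1 := AEEqFun.ext (by
    filter_upwards [AEEqFun.coeFn_mul Winv W, AEEqFun.coeFn_mk (fun ω => (W ω)⁻¹) hsm,
      AEEqFun.coeFn_one (β := ℝ) (μ := P), hW] with ω h1 h2 h3 hpos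
    rw [h1]
    simp only [Pi.mul_apply, Pi.one_apply]
    rw [h2, h3, inv_mul_cancel₀ (ne_of_gt hpos)]; rfl)
  have hu₀0 : u₀ = 0 := by
    calc u₀ = (1 : Ω →ₘ[P] ℝ) • u₀ := (one_smul _ _).symm
      _ = (Winv * W) • u₀ := by rw [hWinv]
      _ = Winv • (W • u₀) := mul_smul _ _ _
      _ = 0 := by rw [hWu₀, smul_zero]
  rwa [hu₀0] at hu₀

/-- if no part of `X` lies in `U` on any positive-measure subset of `B`,
then `p_U(X) ≥ 1` on `B`. -/
theorem stmt_10 {Ω : Type*} [MeasurableSpace Ω] (P : MeasureTheory.Measure Ω)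
    [IsProbabilityMeasure P]
    {E : Type*} [AddCommGroup E] [Module (Ω →ₘ[P] ℝ) E]
    (U : Set E) (hconv : IsL0Convex P U) (habs : IsL0Absorbent P U)
    (X : E) (B : Set Ω) (hB : MeasurableSet B)
    (h : ∀ (A : Set Ω) (hA : MeasurableSet A), A ⊆ B → 0 < P A →
      ∀ u ∈ U, ind P A hA • X ≠ ind P A hA • u)
    (a : Ω →ₘ[P] ℝ) (ha : IsGLB (gaugeSet P U X) a) :
    ∀ᵐ ω ∂P, ω ∈ B → 1 ≤ a ω := by
  have h0 : (0 : E) ∈ U := zero_mem_of_absorbent P habs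
  have key : ind P B hB ∈ lowerBounds (gaugeSet P U X) := by
    rintro Y ⟨hY0, hYU⟩
    obtain ⟨u, hu, hYu⟩ := Set.mem_smul_set.mp hYU
    have hY0' : ∀ᵐ ω ∂P, (0 : ℝ) ≤ Y ω := by
      filter_upwards [AEEqFun.coeFn_le.mpr hY0, AEEqFun.coeFn_zero (β := ℝ) (μ := P)]
        with ω h1 h2
      simpa [h2] using h1
    have hgm : Measurable (Y.aestronglyMeasurable.aemeasurable.mk Y) :=
      Y.aestronglyMeasurable.aemeasurable.measurable_mk
    set g := Y.aestronglyMeasurable.aemeasurable.mk Y with hgdef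
    have hgae : ⇑Y =ᵐ[P] g := Y.aestronglyMeasurable.aemeasurable.ae_eq_mk
    set S : Set Ω := B ∩ {ω | g ω < 1} with hSdef
    have hS : MeasurableSet S := hB.inter (hgm measurableSet_Iio)
    by_cases hPS : P S = 0
    · rw [← AEEqFun.coeFn_le]
      have hnS : ∀ᵐ ω ∂P, ω ∉ S := measure_eq_zero_iff_ae_notMem.mp hPS
      filter_upwards [hnS, hgae, hY0', coeFn_ind P B hB] with ω h1 h2 h3 h4
      rw [h4]
      by_cases hωB : ω ∈ B
      · have : ¬ g ω < 1 := fun hc => h1 ⟨hωB, hc⟩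
        simp only [Set.indicator_of_mem hωB]
        rw [h2]
        linarith
      · simpa [Set.indicator_of_notMem hωB, ← h2] using h3
    · exfalso
      have hPSpos : 0 < P S := lt_of_le_of_ne (zero_le) (Ne.symm hPS)
      set Z : Ω →ₘ[P] ℝ := ind P S hS * Y with hZdef
      have hZ0 : 0 ≤ Z := by
        rw [← AEEqFun.coeFn_le]
        filter_upwards [AEEqFun.coeFn_zero (β := ℝ) (μ := P),
          AEEqFun.coeFn_mul (ind P S hS) Y, coeFn_ind P S hS, hY0'] with ω e0 emul eind hy
        rw [e0, emul]
        simp only [Pi.mul_apply, Pi.zero_apply]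
        rw [eind]
        exact mul_nonneg (Set.indicator_nonneg (fun _ _ => zero_le_one) ω) hy
      have hZ1 : Z ≤ 1 := by
        rw [← AEEqFun.coeFn_le]
        filter_upwards [AEEqFun.coeFn_mul (ind P S hS) Y, coeFn_ind P S hS, hgae,
          AEEqFun.coeFn_one (β := ℝ) (μ := P)] with ω emul eind hgω e1
        rw [emul, e1]
        simp only [Pi.mul_apply, Pi.one_apply]
        rw [eind]
        by_cases hωS : ω ∈ S
        · rw [Set.indicator_of_mem hωS, one_mul, hgω]
          exact le_of_lt hωS.2
        · rw [Set.indicator_of_notMem hωS, zero_mul]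
          exact zero_le_one
      have hu' : Z • u + (1 - Z) • (0 : E) ∈ U := hconv u hu 0 h0 Z hZ0 hZ1
      rw [smul_zero, add_zero] at hu'
      apply h S hS Set.inter_subset_left hPSpos (Z • u) hu'
      rw [← hYu, smul_smul, smul_smul]
      congr 1
      rw [hZdef, ← mul_assoc, ind_idem]
  have hle : ind P B hB ≤ a := ha.2 key
  filter_upwards [AEEqFun.coeFn_le.mpr hle, coeFn_ind P B hB] with ω h1 h2 hωB
  rw [h2, Set.indicator_of_mem hωB] at h1
  exact h1
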